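/- Let Z' be a connected induced subgraph of the diagonal grid graph Z^D_{n−1,T}. Then there exist a natural number n' ≤ n and a time-labeling λ of the edges of the path P_{n'} with labels in [T] such that Z' is isomorphic to the 2-temporal line graph L_2((P_{n'}, λ)). -/

import Mathlib

variable {V : Type*}

/-- The underlying (static) graph of a temporal graph given by its time-labeling. -/
def ugraph (lab : Sym2 V → Finset ℕ) : SimpleGraph V where
  Adj x y := x ≠ y ∧ (lab s(x, y)).Nonempty
  symm := by
    constructor
    intro x y h
    exact ⟨h.1.symm, by rw [Sym2.eq_swap]; exact h.2⟩
  loopless := by constructor; intro x h; exact h.1 rfl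

/-- `(e, t)` is a time edge of the temporal graph given by `lab`. -/
def IsTimeEdge (lab : Sym2 V → Finset ℕ) (p : Sym2 V × ℕ) : Prop :=
  ¬ p.1.IsDiag ∧ p.2 ∈ lab p.1

/-- Two time edges are Δ-independent: edges disjoint or labels at least Δ apart. -/
def DIndep (Δ : ℕ) (p q : Sym2 V × ℕ) : Prop :=
  (∀ v, v ∈ p.1 → v ∉ q.1) ∨ Δ ≤ ((p.2 : ℤ) - (q.2 : ℤ)).natAbs

/-- A Δ-temporal matching. -/
def IsTM (lab : Sym2 V → Finset ℕ) (Δ : ℕ) (M : Finset (Sym2 V × ℕ)) : Prop :=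
  (∀ p ∈ M, IsTimeEdge lab p) ∧ ∀ p ∈ M, ∀ q ∈ M, p ≠ q → DIndep Δ p q

/-- μ_Δ: maximum cardinality of a Δ-temporal matching. -/
noncomputable def tmu (lab : Sym2 V → Finset ℕ) (Δ : ℕ) : ℕ :=
  sSup {k | ∃ M : Finset (Sym2 V × ℕ), IsTM lab Δ M ∧ M.card = k}

/-- The temporal graph has lifetime `T`. -/
def HasLifetime (lab : Sym2 V → Finset ℕ) (T : ℕ) : Prop :=
  (∀ e, ∀ t ∈ lab e, 1 ≤ t ∧ t ≤ T) ∧ ∃ e : Sym2 V, ¬ e.IsDiag ∧ T ∈ lab e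

/-- The snapshot at time `t`. -/
def tsnapshot (lab : Sym2 V → Finset ℕ) (t : ℕ) : SimpleGraph V where
  Adj x y := x ≠ y ∧ t ∈ lab s(x, y)
  symm := by
    constructor
    intro x y h
    exact ⟨h.1.symm, by rw [Sym2.eq_swap]; exact h.2⟩
  loopless := by constructor; intro x h; exact h.1 rfl

/-- 𝒢|_S : keep only time edges with label in `S`. -/
def trestrict (lab : Sym2 V → Finset ℕ) (S : Finset ℕ) : Sym2 V → Finset ℕ :=
  fun e => lab e ∩ S

/-- A finite matching of a static graph. -/
def IsMatchingF (G : SimpleGraph V) (R : Finset (Sym2 V)) : Prop :=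
  (∀ e ∈ R, e ∈ G.edgeSet) ∧ ∀ e ∈ R, ∀ e' ∈ R, e ≠ e' → ∀ v, v ∈ e → v ∉ e'

/-- ν(G): maximum cardinality of a matching. -/
noncomputable def matchNum (G : SimpleGraph V) : ℕ :=
  sSup {k | ∃ R : Finset (Sym2 V), IsMatchingF G R ∧ R.card = k}

/-- An independent set of a static graph. -/
def IsIndepF (G : SimpleGraph V) (S : Finset V) : Prop :=
  ∀ u ∈ S, ∀ v ∈ S, ¬ G.Adj u v

/-- α(G): maximum cardinality of an independent set. -/
noncomputable def indepNum (G : SimpleGraph V) : ℕ :=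
  sSup {k | ∃ S : Finset V, IsIndepF G S ∧ S.card = k}

/-- The Δ-temporal line graph: vertices are the time edges, two distinct time edges are
adjacent iff the edges share a vertex and the labels are less than Δ apart. -/
def tline (lab : Sym2 V → Finset ℕ) (Δ : ℕ) :
    SimpleGraph {p : Sym2 V × ℕ // IsTimeEdge lab p} where
  Adj p q := p ≠ q ∧ (∃ v, v ∈ p.1.1 ∧ v ∈ q.1.1) ∧ ((p.1.2 : ℤ) - (q.1.2 : ℤ)).natAbs < Δ
  symm := by
    constructor
    rintro p q ⟨hne, ⟨v, hv1, hv2⟩, hlt⟩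
    exact ⟨hne.symm, ⟨v, hv2, hv1⟩, by omega⟩
  loopless := by constructor; rintro p ⟨hne, -⟩; exact hne rfl

/-- The diagonal grid graph (king's graph) `Z^D_{n,m}` on vertex set `Fin n × Fin m`:
`v_{i,j}` and `v_{i',j'}` are adjacent iff they are distinct and
`|i-i'|² + |j-j'|² ≤ 2`. -/
def diagGrid (n m : ℕ) : SimpleGraph (Fin n × Fin m) where
  Adj p q := p ≠ q ∧ ((p.1 : ℤ) - (q.1 : ℤ)) ^ 2 + ((p.2 : ℤ) - (q.2 : ℤ)) ^ 2 ≤ 2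
  symm := by
    constructor
    intro p q h
    refine ⟨h.1.symm, ?_⟩
    have heq : ((q.1 : ℤ) - (p.1 : ℤ)) ^ 2 + ((q.2 : ℤ) - (p.2 : ℤ)) ^ 2
        = ((p.1 : ℤ) - (q.1 : ℤ)) ^ 2 + ((p.2 : ℤ) - (q.2 : ℤ)) ^ 2 := by ring
    rw [heq]; exact h.2
  loopless := by constructor; intro p h; exact h.1 rfl

/-- auxiliary: bounding coordinates from the squared condition -/
lemma st9_absle {x y : ℤ} (h : x ^ 2 + y ^ 2 ≤ 2) : x.natAbs ≤ 1 ∧ y.natAbs ≤ 1 := by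
  have hx := sq_nonneg x
  have hy := sq_nonneg y
  have h1 : x ^ 2 ≤ 2 := by linarith
  have h2 : y ^ 2 ≤ 2 := by linarith
  have hx1 : -1 ≤ x ∧ x ≤ 1 := by constructor <;> nlinarith
  have hy1 : -1 ≤ y ∧ y ≤ 1 := by constructor <;> nlinarith
  omega

lemma st9_lesq {x y : ℤ} (hx : x.natAbs ≤ 1) (hy : y.natAbs ≤ 1) : x ^ 2 + y ^ 2 ≤ 2 := by
  have hx1 : -1 ≤ x ∧ x ≤ 1 := by omega
  have hy1 : -1 ≤ y ∧ y ≤ 1 := by omega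
  nlinarith [hx1.1, hx1.2, hy1.1, hy1.2]

/-- Discrete intermediate value theorem along a walk in an induced subgraph
of the diagonal grid. -/
lemma st9_walkIVT {n T : ℕ} {S : Set (Fin n × Fin T)} {x y : ↥S}
    (w : ((diagGrid n T).induce S).Walk x y) :
    ∀ c : ℕ, (((x : Fin n × Fin T).1.val ≤ c ∧ c ≤ (y : Fin n × Fin T).1.val) ∨
      ((y : Fin n × Fin T).1.val ≤ c ∧ c ≤ (x : Fin n × Fin T).1.val)) →
    ∃ z ∈ w.support, (z : Fin n × Fin T).1.val = c := by
  induction w with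
  | nil => exact fun c hc => ⟨_, SimpleGraph.Walk.start_mem_support _, by omega⟩
  | @cons u v yy hadj w ih =>
    intro c hc
    have hAdj : (diagGrid n T).Adj (u : Fin n × Fin T) (v : Fin n × Fin T) := hadj
    have hd : (((u : Fin n × Fin T).1.val : ℤ) - ((v : Fin n × Fin T).1.val : ℤ)).natAbs ≤ 1 := by
      have := (st9_absle hAdj.2).1
      exact this
    by_cases hcu : c = (u : Fin n × Fin T).1.val
    · exact ⟨u, SimpleGraph.Walk.start_mem_support _, hcu.symm⟩
    · obtain ⟨z, hz, hzc⟩ := ih c (by omega)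
      exact ⟨z, by simp [SimpleGraph.Walk.support_cons]; right; exact hz, hzc⟩

/-- the time edge (in `Sym2 (Fin (b - a + 2))`) associated to a grid vertex -/
def st9_ve {n T : ℕ} (a b : ℕ) (p : Fin n × Fin T) : Sym2 (Fin (b - a + 2)) :=
  s((⟨min (p.1.val - a) (b - a), by omega⟩ : Fin (b - a + 2)),
    (⟨min (p.1.val - a) (b - a) + 1, by omega⟩ : Fin (b - a + 2)))

open Classical in
/-- the time-labeling induced by a set `S` of grid vertices -/
noncomputable def st9_lab {n T : ℕ} (S : Set (Fin n × Fin T)) (a b : ℕ) :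
    Sym2 (Fin (b - a + 2)) → Finset ℕ :=
  fun e => (Finset.Icc 1 T).filter
    (fun t => ∃ p, p ∈ S ∧ st9_ve a b p = e ∧ p.2.val + 1 = t)

lemma st9_mem_lab {n T : ℕ} {S : Set (Fin n × Fin T)} {a b t : ℕ}
    {e : Sym2 (Fin (b - a + 2))} :
    t ∈ st9_lab S a b e ↔
      t ∈ Finset.Icc 1 T ∧ ∃ p, p ∈ S ∧ st9_ve a b p = e ∧ p.2.val + 1 = t := by
  classical
  simp [st9_lab, Finset.mem_filter]

lemma st9_ve_inj {n T : ℕ} {a b : ℕ} {p q : Fin n × Fin T}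
    (h : st9_ve a b p = st9_ve a b q) :
    min (p.1.val - a) (b - a) = min (q.1.val - a) (b - a) := by
  rw [st9_ve, st9_ve, Sym2.eq_iff] at h
  rcases h with ⟨h1, h2⟩ | ⟨h1, h2⟩
  · exact congrArg Fin.val h1
  · have e1 := congrArg Fin.val h1
    have e2 := congrArg Fin.val h2
    simp only at e1 e2
    omega

/-- Every connected induced subgraph `Z'` of the diagonal grid graph
`Z^D_{n-1,T}` is the 2-temporal line graph of a temporal graph whose underlying graph
is a path `P_{n'}` with `n' ≤ n` and whose labels lie in `[T]`. -/
theorem stmt9 (n T : ℕ) (S : Set (Fin (n - 1) × Fin T))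
    (hconn : ((diagGrid (n - 1) T).induce S).Connected) :
    ∃ n', n' ≤ n ∧ ∃ lab : Sym2 (Fin n') → Finset ℕ,
      ugraph lab = SimpleGraph.pathGraph n' ∧
      (∀ e, ∀ t ∈ lab e, t ∈ Finset.Icc 1 T) ∧
      Nonempty ((diagGrid (n - 1) T).induce S ≃g tline lab 2) := by
  classical
  have hne : S.Nonempty := by
    obtain ⟨⟨x, hx⟩⟩ := hconn.nonempty
    exact ⟨x, hx⟩
  obtain ⟨p0, hp0⟩ := hne
  have hn1 : 0 < n - 1 := p0.1.pos
  have hSfin : S.Finite := Set.toFinite S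
  set I : Finset ℕ := hSfin.toFinset.image (fun p => p.1.val) with hI
  have hIne : I.Nonempty := ⟨p0.1.val, Finset.mem_image.mpr ⟨p0, hSfin.mem_toFinset.mpr hp0, rfl⟩⟩
  set a := I.min' hIne with ha
  set b := I.max' hIne with hb
  have hmem_ab : ∀ p ∈ S, a ≤ p.1.val ∧ p.1.val ≤ b := by
    intro p hp
    have hpI : p.1.val ∈ I := Finset.mem_image.mpr ⟨p, hSfin.mem_toFinset.mpr hp, rfl⟩
    exact ⟨Finset.min'_le _ _ hpI, Finset.le_max' _ _ hpI⟩
  have hexa : ∃ p ∈ S, p.1.val = a := by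
    obtain ⟨p, hp, hpv⟩ := Finset.mem_image.mp (I.min'_mem hIne)
    exact ⟨p, hSfin.mem_toFinset.mp hp, hpv⟩
  have hexb : ∃ p ∈ S, p.1.val = b := by
    obtain ⟨p, hp, hpv⟩ := Finset.mem_image.mp (I.max'_mem hIne)
    exact ⟨p, hSfin.mem_toFinset.mp hp, hpv⟩
  obtain ⟨pa, hpaS, hpa⟩ := hexa
  obtain ⟨pb, hpbS, hpb⟩ := hexb
  have hab : a ≤ b := by
    have := hmem_ab pb hpbS
    omega
  have hbn : b < n - 1 := by
    have := pb.1.isLt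
    omega
  -- every column between a and b is hit by S
  have hcol : ∀ c : ℕ, a ≤ c → c ≤ b → ∃ p ∈ S, p.1.val = c := by
    intro c hac hcb
    obtain ⟨w⟩ := hconn.preconnected ⟨pa, hpaS⟩ ⟨pb, hpbS⟩
    obtain ⟨z, _, hz⟩ := st9_walkIVT w c (by left; constructor <;> simp [hpa, hpb] <;> omega)
    exact ⟨z.val, z.2, hz⟩
  refine ⟨b - a + 2, by omega, st9_lab S a b, ?_, ?_, ?_⟩
  · -- ugraph = pathGraph
    apply SimpleGraph.ext
    ext x y
    show (x ≠ y ∧ (st9_lab S a b s(x, y)).Nonempty) ↔ _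
    rw [SimpleGraph.pathGraph_adj]
    constructor
    · rintro ⟨hxy, t, ht⟩
      obtain ⟨-, p, hpS, he, -⟩ := st9_mem_lab.mp ht
      rw [st9_ve, Sym2.eq_iff] at he
      rcases he with ⟨h1, h2⟩ | ⟨h1, h2⟩
      · left
        have e1 := congrArg Fin.val h1
        have e2 := congrArg Fin.val h2
        simp only at e1 e2
        omega
      · right
        have e1 := congrArg Fin.val h1
        have e2 := congrArg Fin.val h2
        simp only at e1 e2
        omega
    · have key : ∀ u v : Fin (b - a + 2), u.val + 1 = v.val →
          u ≠ v ∧ (st9_lab S a b s(u, v)).Nonempty := by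
        intro u v huv
        have hub : u.val ≤ b - a := by have := v.isLt; omega
        obtain ⟨p, hpS, hpc⟩ := hcol (a + u.val) (by omega) (by omega)
        have hmm := hmem_ab p hpS
        refine ⟨fun h => by rw [h] at huv; omega, p.2.val + 1, ?_⟩
        rw [st9_mem_lab]
        refine ⟨by simp, p, hpS, ?_, rfl⟩
        rw [st9_ve, Sym2.eq_iff]
        left
        constructor <;> apply Fin.ext <;> simp only <;> omega
      rintro (h | h)
      · exact key x y h
      · obtain ⟨h1, h2⟩ := key y x h
        exact ⟨h1.symm, by rwa [Sym2.eq_swap]⟩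
  · -- labels in [1, T]
    intro e t ht
    exact (st9_mem_lab.mp ht).1
  · -- the isomorphism
    have hTE : ∀ p : ↑S, IsTimeEdge (st9_lab S a b) (st9_ve a b p.val, p.val.2.val + 1) := by
      intro p
      constructor
      · rw [st9_ve, Sym2.mk_isDiag_iff]
        intro h
        have := congrArg Fin.val h
        simp only at this
        omega
      · rw [st9_mem_lab]
        refine ⟨by simp, p.val, p.2, rfl, rfl⟩
    let φ : ↑S → {q : Sym2 (Fin (b - a + 2)) × ℕ // IsTimeEdge (st9_lab S a b) q} :=
      fun p => ⟨(st9_ve a b p.val, p.val.2.val + 1), hTE p⟩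
    have hinj : Function.Injective φ := by
      intro p q h
      have h' := congrArg (fun r => r.val) h
      simp only [φ] at h'
      have h1 : st9_ve a b p.val = st9_ve a b q.val := congrArg Prod.fst h'
      have h2 : p.val.2.val + 1 = q.val.2.val + 1 := congrArg Prod.snd h'
      have hmin := st9_ve_inj h1
      have hp1 := hmem_ab p.val p.2
      have hq1 := hmem_ab q.val q.2
      apply Subtype.ext
      apply Prod.ext <;> apply Fin.ext <;> omega
    have hsurj : Function.Surjective φ := by
      rintro ⟨⟨e, t⟩, hdiag, hmem⟩
      obtain ⟨-, p, hpS, he, ht⟩ := st9_mem_lab.mp hmem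
      exact ⟨⟨p, hpS⟩, Subtype.ext (Prod.ext he ht)⟩
    have hadjiff : ∀ p q : ↑S,
        (tline (st9_lab S a b) 2).Adj (φ p) (φ q) ↔
          ((diagGrid (n - 1) T).induce S).Adj p q := by
      intro p q
      have hp1 := hmem_ab p.val p.2
      have hq1 := hmem_ab q.val q.2
      constructor
      · rintro ⟨hne, ⟨v, hv1, hv2⟩, hlt⟩
        have hpq : p ≠ q := fun h => hne (congrArg φ h)
        refine ⟨fun h => hpq (Subtype.ext h), ?_⟩
        simp only [φ, st9_ve, Sym2.mem_iff] at hv1 hv2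
        have hv1' : v.val = min (p.val.1.val - a) (b - a) ∨
            v.val = min (p.val.1.val - a) (b - a) + 1 := by
          rcases hv1 with h | h <;> [left; right] <;> rw [h]
        have hv2' : v.val = min (q.val.1.val - a) (b - a) ∨
            v.val = min (q.val.1.val - a) (b - a) + 1 := by
          rcases hv2 with h | h <;> [left; right] <;> rw [h]
        show ((p.val.1.val : ℤ) - (q.val.1.val : ℤ)) ^ 2 +
          ((p.val.2.val : ℤ) - (q.val.2.val : ℤ)) ^ 2 ≤ 2
        simp only [φ] at hlt
        apply st9_lesq <;> omega
      · intro hAdj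
        have hne : (p : Fin (n - 1) × Fin T) ≠ q := hAdj.1
        have hsq : ((p.val.1.val : ℤ) - (q.val.1.val : ℤ)) ^ 2 +
            ((p.val.2.val : ℤ) - (q.val.2.val : ℤ)) ^ 2 ≤ 2 := hAdj.2
        obtain ⟨hx, hy⟩ := st9_absle hsq
        have hpq : φ p ≠ φ q := fun h => hne (congrArg Subtype.val (hinj h))
        refine ⟨hpq, ?_, by simp only [φ]; omega⟩
        have hb1 : max (min (p.val.1.val - a) (b - a)) (min (q.val.1.val - a) (b - a))
            < b - a + 2 := by omega
        refine ⟨⟨_, hb1⟩, ?_, ?_⟩ <;>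
          simp only [φ, st9_ve, Sym2.mem_iff, Fin.mk.injEq] <;> omega
    exact ⟨{ toEquiv := Equiv.ofBijective φ ⟨hinj, hsurj⟩,
             map_rel_iff' := fun {p q} => hadjiff p q }⟩
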